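/- Fix q with 1 < q < 2, a relaxation interval ε = [ε₋, ε₊] with 0 < ε₋ ≤ ε₊ < ∞, and let Ω ⊂ ℝ^d be a measurable set of finite Lebesgue measure. Let σ_ε, τ_n ∈ L²(Ω; ℝ^d) satisfy the Euler–Lagrange orthogonality ∫_Ω A*_ε(σ_ε)·(τ_n - σ_ε) dx = 0, and set w_n = clamp_ε(|τ_n|)^{q-2}. Then there exists a constant C_q < ∞ depending solely on q (independent of ε) such that (1/2)∫_Ω w_n |τ_n - σ_ε|² dx ≤ C_q (ε₊/ε₋)^{2-q} (J*_ε(τ_n) - J*_ε(σ_ε)). -/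

import Mathlib

open Real MeasureTheory
open scoped RealInnerProductSpace

/-- The relaxed integrand `κ*_ε`. -/
noncomputable def kappaStar (q em ep t : ℝ) : ℝ :=
  if t ≤ em then (1/2) * em ^ (q-2) * t^2 + (1/q - 1/2) * em ^ q
  else if t ≤ ep then (1/q) * t ^ q
  else (1/2) * ep ^ (q-2) * t^2 + (1/q - 1/2) * ep ^ q

/-- The relaxed dual energy `J*_ε(τ) = ∫_Ω κ*_ε(|τ|) dx`. -/
noncomputable def Jeps (q em ep : ℝ) {d : ℕ} (Ω : Set (EuclideanSpace ℝ (Fin d)))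
    (τ : EuclideanSpace ℝ (Fin d) → EuclideanSpace ℝ (Fin d)) : ℝ :=
  ∫ x in Ω, kappaStar q em ep ‖τ x‖

/-- `A*_ε(P) = clamp_ε(|P|)^(q-2) P`. -/
noncomputable def Astar (q em ep : ℝ) {d : ℕ} (P : EuclideanSpace ℝ (Fin d)) :
    EuclideanSpace ℝ (Fin d) :=
  (max em (min ‖P‖ ep)) ^ (q-2) • P

noncomputable def mfun (q em ep t : ℝ) : ℝ := (max em (min t ep)) ^ (q-2) * t

section scalar
variable {q em ep : ℝ}

lemma mfun_of_le (hee : em ≤ ep) {t : ℝ} (h : t ≤ em) : mfun q em ep t = em ^ (q-2) * t := by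
  unfold mfun
  rw [min_eq_left (h.trans hee), max_eq_left h]

lemma mfun_of_mem {t : ℝ} (h1 : em ≤ t) (h2 : t ≤ ep) : mfun q em ep t = t ^ (q-2) * t := by
  unfold mfun
  rw [min_eq_left h2, max_eq_right h1]

lemma mfun_of_ge (hee : em ≤ ep) {t : ℝ} (h : ep ≤ t) : mfun q em ep t = ep ^ (q-2) * t := by
  unfold mfun
  rw [min_eq_right h, max_eq_right hee]

/-- Bernoulli / concavity tangent inequality for `x ^ (q-1)`. -/
lemma bern (hq1 : 1 < q) (hq2 : q < 2) {t s : ℝ} (ht : 0 < t) (hts : t ≤ s) :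
    t ^ (q-1) ≤ s ^ (q-1) + (q-1) * s ^ (q-2) * (t - s) := by
  have hs : 0 < s := lt_of_lt_of_le ht hts
  have h := Real.geom_mean_le_arith_mean2_weighted (by linarith : (0:ℝ) ≤ q-1)
    (by linarith : (0:ℝ) ≤ 2-q) (by positivity : (0:ℝ) ≤ t / s) zero_le_one (by ring)
  rw [Real.one_rpow, mul_one, mul_one] at h
  have hds : (t/s) ^ (q-1) = t ^ (q-1) / s ^ (q-1) := Real.div_rpow ht.le hs.le _
  have hs1 : (0:ℝ) < s ^ (q-1) := Real.rpow_pos_of_pos hs _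
  have key : t ^ (q-1) ≤ ((q-1) * (t/s) + (2-q)) * s ^ (q-1) := by
    have := mul_le_mul_of_nonneg_right h hs1.le
    calc t ^ (q-1) = (t/s) ^ (q-1) * s ^ (q-1) := by
          rw [hds]; field_simp
      _ ≤ _ := this
  have h2 : s ^ (q-1) = s ^ (q-2) * s := by
    rw [show q-1 = (q-2)+1 by ring, Real.rpow_add_one hs.ne']
  have h3 : t / s * s = t := div_mul_cancel₀ t hs.ne'
  have key2 : t ^ (q-1) ≤ (q-1) * (t * s ^ (q-2)) + (2-q) * s ^ (q-1) := by
    calc t ^ (q-1) ≤ ((q-1) * (t/s) + (2-q)) * s ^ (q-1) := key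
      _ = (q-1) * ((t/s*s) * s ^ (q-2)) + (2-q) * s ^ (q-1) := by rw [h2]; ring
      _ = _ := by rw [h3]
  nlinarith [key2, h2]

/-- Uniform gap monotonicity of `mfun` with slope `(q-1) ep^(q-2)`. -/
lemma gap (hq1 : 1 < q) (hq2 : q < 2) (hem : 0 < em) (hee : em ≤ ep) {t s : ℝ}
    (hts : t ≤ s) :
    mfun q em ep t + (q-1) * ep ^ (q-2) * (s - t) ≤ mfun q em ep s := by
  have hep : 0 < ep := hem.trans_le hee
  have hq2' : q - 2 ≤ 0 := by linarith
  have hslope : (q-1) * ep ^ (q-2) ≤ em ^ (q-2) := by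
    have h1 : ep ^ (q-2) ≤ em ^ (q-2) := Real.rpow_le_rpow_of_nonpos hem hee hq2'
    have h2 : (0:ℝ) < ep ^ (q-2) := Real.rpow_pos_of_pos hep _
    nlinarith
  have hslope' : (q-1) * ep ^ (q-2) ≤ ep ^ (q-2) := by
    have h2 : (0:ℝ) < ep ^ (q-2) := Real.rpow_pos_of_pos hep _
    nlinarith
  -- three single-region gap estimates
  have gap1 : ∀ u v : ℝ, u ≤ v → v ≤ em →
      mfun q em ep u + (q-1) * ep ^ (q-2) * (v - u) ≤ mfun q em ep v := by
    intro u v huv hv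
    rw [mfun_of_le hee (huv.trans hv), mfun_of_le hee hv]
    nlinarith [hslope]
  have gap2 : ∀ u v : ℝ, em ≤ u → u ≤ v → v ≤ ep →
      mfun q em ep u + (q-1) * ep ^ (q-2) * (v - u) ≤ mfun q em ep v := by
    intro u v hu huv hv
    have hu0 : 0 < u := hem.trans_le hu
    have hv0 : 0 < v := hu0.trans_le huv
    rw [mfun_of_mem hu (huv.trans hv), mfun_of_mem (hu.trans huv) hv]
    have e1 : u ^ (q-2) * u = u ^ (q-1) := by
      rw [show q-1 = (q-2)+1 by ring, Real.rpow_add_one hu0.ne']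
    have e2 : v ^ (q-2) * v = v ^ (q-1) := by
      rw [show q-1 = (q-2)+1 by ring, Real.rpow_add_one hv0.ne']
    rw [e1, e2]
    have hb := bern hq1 hq2 hu0 huv
    have hvs : ep ^ (q-2) ≤ v ^ (q-2) := Real.rpow_le_rpow_of_nonpos hv0 hv hq2'
    nlinarith [mul_nonneg (mul_nonneg (by linarith : (0:ℝ) ≤ q-1) (by linarith : (0:ℝ) ≤ v - u))
      (by linarith : (0:ℝ) ≤ v ^ (q-2) - ep ^ (q-2))]
  have gap3 : ∀ u v : ℝ, ep ≤ u → u ≤ v →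
      mfun q em ep u + (q-1) * ep ^ (q-2) * (v - u) ≤ mfun q em ep v := by
    intro u v hu huv
    rw [mfun_of_ge hee hu, mfun_of_ge hee (hu.trans huv)]
    nlinarith [hslope']
  rcases le_total s em with h1 | h1
  · exact gap1 t s hts h1
  rcases le_total t em with h2 | h2
  · -- t ≤ em ≤ s
    rcases le_total s ep with h3 | h3
    · have a1 := gap1 t em h2 le_rfl
      have a2 := gap2 em s le_rfl h1 h3
      linarith
    · have a1 := gap1 t em h2 le_rfl
      have a2 := gap2 em ep le_rfl hee le_rfl
      have a3 := gap3 ep s le_rfl h3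
      linarith
  · rcases le_total s ep with h3 | h3
    · exact gap2 t s h2 hts h3
    · rcases le_total t ep with h4 | h4
      · have a2 := gap2 t ep h2 h4 le_rfl
        have a3 := gap3 ep s le_rfl h3
        linarith
      · exact gap3 t s h4 hts

end scalar

section deriv
variable {q em ep : ℝ}

lemma hb1 (c k : ℝ) (u : ℝ) :
    HasDerivAt (fun x : ℝ => (1/2) * c * x^2 + k) (c * u) u := by
  have h := ((hasDerivAt_pow 2 u).const_mul ((1/2) * c)).add_const k
  refine h.congr_deriv ?_
  push_cast
  ring

lemma hb2 (hq : q ≠ 0) {u : ℝ} (hu : u ≠ 0) :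
    HasDerivAt (fun x : ℝ => (1/q) * x ^ q) (u ^ (q-1)) u := by
  have h := (Real.hasDerivAt_rpow_const (p := q) (Or.inl hu)).const_mul (1/q)
  refine h.congr_deriv ?_
  field_simp

lemma rpow_succ {x : ℝ} (hx : x ≠ 0) (y : ℝ) : x ^ y * x = x ^ (y + 1) :=
  (Real.rpow_add_one hx y).symm

lemma branch_eq (hq : 1 < q) {x : ℝ} (hx : 0 < x) :
    (1/2) * x ^ (q-2) * x^2 + (1/q - 1/2) * x ^ q = (1/q) * x ^ q := by
  have e1 : x ^ (q-2) * x = x ^ (q-1) := by rw [rpow_succ hx.ne']; congr 1; ring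
  have e2 : x ^ (q-1) * x = x ^ q := by rw [rpow_succ hx.ne']; congr 1; ring
  have e3 : x ^ (q-2) * x^2 = x ^ q := by rw [sq, ← mul_assoc, e1, e2]
  nlinarith [e3]

lemma hasDerivAt_kappaStar (hq1 : 1 < q) (hq2 : q < 2) (hem : 0 < em) (hee : em ≤ ep)
    (t : ℝ) : HasDerivAt (fun u => kappaStar q em ep u) (mfun q em ep t) t := by
  have hep : 0 < ep := hem.trans_le hee
  have hq0 : q ≠ 0 := by positivity
  rcases eq_or_lt_of_le hee with rfl | hlt
  · -- degenerate case em = ep : kappaStar is globally the first quadratic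
    have hfe : (fun u => kappaStar q em em u) =
        fun u => (1/2) * em ^ (q-2) * u^2 + (1/q - 1/2) * em ^ q := by
      funext u
      unfold kappaStar
      by_cases h1 : u ≤ em
      · rw [if_pos h1]
      · rw [if_neg h1, if_neg h1]
    have hm : mfun q em em t = em ^ (q-2) * t := by
      unfold mfun
      rw [max_eq_left (min_le_right t em)]
    rw [hfe, hm]
    exact hb1 _ _ t
  -- now em < ep
  have hpsi_le : ∀ u : ℝ, u ≤ em →
      kappaStar q em ep u = (1/2) * em ^ (q-2) * u^2 + (1/q - 1/2) * em ^ q := by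
    intro u hu; unfold kappaStar; rw [if_pos hu]
  have hpsi_mid : ∀ u : ℝ, u ∈ Set.Icc em ep → kappaStar q em ep u = (1/q) * u ^ q := by
    rintro u ⟨hu1, hu2⟩
    unfold kappaStar
    by_cases h : u ≤ em
    · rw [if_pos h]
      have : u = em := le_antisymm h hu1
      rw [this]
      exact branch_eq hq1 hem
    · rw [if_neg h, if_pos hu2]
  have hpsi_ge : ∀ u : ℝ, ep ≤ u →
      kappaStar q em ep u = (1/2) * ep ^ (q-2) * u^2 + (1/q - 1/2) * ep ^ q := by
    intro u hu
    unfold kappaStar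
    rw [if_neg (by linarith : ¬ u ≤ em)]
    by_cases h : u ≤ ep
    · rw [if_pos h]
      have : u = ep := le_antisymm h hu
      rw [this]
      exact (branch_eq hq1 hep).symm
    · rw [if_neg h]
  rcases lt_trichotomy t em with h | heq | h
  · have hm : mfun q em ep t = em ^ (q-2) * t := by
      unfold mfun
      rw [min_eq_left (by linarith), max_eq_left h.le]
    rw [hm]
    refine (hb1 (em ^ (q-2)) ((1/q - 1/2) * em ^ q) t).congr_of_eventuallyEq ?_
    filter_upwards [Iio_mem_nhds h] with u hu
    exact hpsi_le u (le_of_lt hu)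
  · -- t = em
    subst heq
    have hm : mfun q t ep t = t ^ (q-2) * t := by
      unfold mfun
      rw [min_eq_left hee, max_self]
    have hd1 : HasDerivWithinAt (fun u => kappaStar q t ep u) (t ^ (q-2) * t)
        (Set.Iic t) t := by
      refine ((hb1 (t ^ (q-2)) ((1/q - 1/2) * t ^ q) t).hasDerivWithinAt).congr ?_ ?_
      · intro u hu; exact hpsi_le u hu
      · exact hpsi_le t le_rfl
    have hd2 : HasDerivWithinAt (fun u => kappaStar q t ep u) (t ^ (q-2) * t)
        (Set.Icc t ep) t := by
      have h2 : HasDerivAt (fun x : ℝ => (1/q) * x ^ q) (t ^ (q-2) * t) t := by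
        have := hb2 (q := q) hq0 hem.ne'
        rwa [show t ^ (q-2) * t = t ^ (q-1) by rw [rpow_succ hem.ne']; congr 1; ring]
      exact h2.hasDerivWithinAt.congr hpsi_mid (hpsi_mid t ⟨le_rfl, hee⟩)
    have hu := hd1.union hd2
    rw [Set.Iic_union_Icc_eq_Iic hee] at hu
    rw [hm]
    exact hu.hasDerivAt (Iic_mem_nhds hlt)
  · have ht0 : 0 < t := hem.trans h
    rcases lt_trichotomy t ep with h2 | heq | h2
    · have hm : mfun q em ep t = t ^ (q-2) * t := by
        unfold mfun
        rw [min_eq_left h2.le, max_eq_right h.le]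
      have hd : HasDerivAt (fun x : ℝ => (1/q) * x ^ q) (mfun q em ep t) t := by
        have := hb2 (q := q) hq0 ht0.ne'
        rwa [hm, show t ^ (q-2) * t = t ^ (q-1) by
          rw [rpow_succ ht0.ne']; congr 1; ring]
      refine hd.congr_of_eventuallyEq ?_
      filter_upwards [Ioo_mem_nhds h h2] with u hu
      exact hpsi_mid u ⟨hu.1.le, hu.2.le⟩
    · -- t = ep
      subst heq
      have hm : mfun q em t t = t ^ (q-2) * t := by
        unfold mfun
        rw [min_self, max_eq_right hee]
      have hd1 : HasDerivWithinAt (fun u => kappaStar q em t u) (t ^ (q-2) * t)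
          (Set.Icc em t) t := by
        have h2 : HasDerivAt (fun x : ℝ => (1/q) * x ^ q) (t ^ (q-2) * t) t := by
          have := hb2 (q := q) hq0 ht0.ne'
          rwa [show t ^ (q-2) * t = t ^ (q-1) by rw [rpow_succ ht0.ne']; congr 1; ring]
        exact h2.hasDerivWithinAt.congr hpsi_mid (hpsi_mid t ⟨hee, le_rfl⟩)
      have hd2 : HasDerivWithinAt (fun u => kappaStar q em t u) (t ^ (q-2) * t)
          (Set.Ici t) t := by
        refine ((hb1 (t ^ (q-2)) ((1/q - 1/2) * t ^ q) t).hasDerivWithinAt).congr ?_ ?_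
        · intro u hu; exact hpsi_ge u hu
        · exact hpsi_ge t le_rfl
      have hu := hd1.union hd2
      rw [Set.Icc_union_Ici_eq_Ici hee] at hu
      rw [hm]
      exact hu.hasDerivAt (Ici_mem_nhds hlt)
    · have hm : mfun q em ep t = ep ^ (q-2) * t := by
        unfold mfun
        rw [min_eq_right h2.le, max_eq_right hee]
      rw [hm]
      refine (hb1 (ep ^ (q-2)) ((1/q - 1/2) * ep ^ q) t).congr_of_eventuallyEq ?_
      filter_upwards [Ioi_mem_nhds h2] with u hu
      exact hpsi_ge u (le_of_lt hu)

end deriv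

section tangent
variable {q em ep : ℝ}

/-- Strong-convexity tangent inequality for `kappaStar`. -/
lemma kappa_tangent (hq1 : 1 < q) (hq2 : q < 2) (hem : 0 < em) (hee : em ≤ ep)
    (a b : ℝ) :
    mfun q em ep a * (b - a) + ((q-1) * ep ^ (q-2) / 2) * (b - a)^2 ≤
      kappaStar q em ep b - kappaStar q em ep a := by
  set F : ℝ → ℝ := fun u => kappaStar q em ep u - mfun q em ep a * u - ((q-1) * ep ^ (q-2)/2) * (u-a)^2
    with hF
  have hder : ∀ u : ℝ, HasDerivAt F (mfun q em ep u - mfun q em ep a - (q-1) * ep ^ (q-2) * (u - a)) u := by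
    intro u
    have h1 := hasDerivAt_kappaStar hq1 hq2 hem hee u
    have h2 : HasDerivAt (fun u : ℝ => mfun q em ep a * u) (mfun q em ep a) u := by
      simpa using (hasDerivAt_id u).const_mul (mfun q em ep a)
    have h3 : HasDerivAt (fun u : ℝ => ((q-1) * ep ^ (q-2)/2) * (u-a)^2) ((q-1) * ep ^ (q-2) * (u - a)) u := by
      have := (((hasDerivAt_id u).sub_const a).pow 2).const_mul ((q-1) * ep ^ (q-2)/2)
      refine this.congr_deriv ?_
      simp only [id_eq]
      push_cast
      ring
    exact (h1.sub h2).sub h3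
  have hcont : Continuous F := by
    have : Differentiable ℝ F := fun u => (hder u).differentiableAt
    exact this.continuous
  rcases le_total a b with hab | hab
  · have hmono : MonotoneOn F (Set.Ici a) := by
      apply monotoneOn_of_deriv_nonneg (convex_Ici a) hcont.continuousOn
      · intro x _
        exact (hder x).differentiableAt.differentiableWithinAt
      · intro x hx
        rw [interior_Ici] at hx
        rw [(hder x).deriv]
        have := gap hq1 hq2 hem hee (le_of_lt hx)
        linarith
    have h := hmono Set.self_mem_Ici (by exact hab : b ∈ Set.Ici a) hab
    simp only [hF] at h
    nlinarith [h]
  · have hmono : AntitoneOn F (Set.Iic a) := by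
      apply antitoneOn_of_deriv_nonpos (convex_Iic a) hcont.continuousOn
      · intro x _
        exact (hder x).differentiableAt.differentiableWithinAt
      · intro x hx
        rw [interior_Iic] at hx
        rw [(hder x).deriv]
        have := gap hq1 hq2 hem hee (le_of_lt hx)
        linarith
    have h := hmono (by exact hab : b ∈ Set.Iic a) Set.self_mem_Iic hab
    simp only [hF] at h
    nlinarith [h]

end tangent
section pointwise
variable {q em ep : ℝ}

lemma half_le_inv (hq1 : 1 < q) (hq2 : q < 2) : (0:ℝ) ≤ 1/q - 1/2 := by
  have hq0 : (0:ℝ) < q := by linarith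
  rw [sub_nonneg, div_le_div_iff₀ (by norm_num) hq0]
  linarith

lemma kappa_nonneg (hq1 : 1 < q) (hq2 : q < 2) (hem : 0 < em) (hee : em ≤ ep)
    {t : ℝ} (ht : 0 ≤ t) : 0 ≤ kappaStar q em ep t := by
  have hep : 0 < ep := hem.trans_le hee
  have hh := half_le_inv hq1 hq2
  unfold kappaStar
  split_ifs with h1 h2
  · have a1 : (0:ℝ) ≤ (1/2) * em ^ (q-2) * t^2 := by positivity
    have a2 : (0:ℝ) ≤ em ^ q := (Real.rpow_pos_of_pos hem q).le
    nlinarith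
  · have a1 : (0:ℝ) ≤ t ^ q := Real.rpow_nonneg ht q
    have hq0 : (0:ℝ) < q := by linarith
    positivity
  · have a1 : (0:ℝ) ≤ (1/2) * ep ^ (q-2) * t^2 := by positivity
    have a2 : (0:ℝ) ≤ ep ^ q := (Real.rpow_pos_of_pos hep q).le
    nlinarith

lemma kappa_le (hq1 : 1 < q) (hq2 : q < 2) (hem : 0 < em) (hee : em ≤ ep)
    {t : ℝ} (ht : 0 ≤ t) :
    kappaStar q em ep t ≤ (1/2) * em ^ (q-2) * t^2 + (1/q - 1/2) * ep ^ q := by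
  have hep : 0 < ep := hem.trans_le hee
  have hh := half_le_inv hq1 hq2
  have hq2' : q - 2 ≤ 0 := by linarith
  unfold kappaStar
  split_ifs with h1 h2
  · have a1 : em ^ q ≤ ep ^ q := Real.rpow_le_rpow hem.le hee (by linarith)
    nlinarith
  · have ht0 : 0 < t := hem.trans (not_le.1 h1)
    have e1 : t ^ (q-2) * t = t ^ (q-1) := by
      rw [rpow_succ ht0.ne']; congr 1; ring
    have e2 : t ^ (q-1) * t = t ^ q := by
      rw [rpow_succ ht0.ne']; congr 1; ring
    have e3 : t ^ (q-2) * t^2 = t ^ q := by rw [sq, ← mul_assoc, e1, e2]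
    have h4 : t ^ (q-2) ≤ em ^ (q-2) :=
      Real.rpow_le_rpow_of_nonpos hem (le_of_lt (not_le.1 h1)) hq2'
    have h5 : t ^ q ≤ ep ^ q := Real.rpow_le_rpow ht h2 (by linarith)
    nlinarith [mul_le_mul_of_nonneg_right h4 (sq_nonneg t)]
  · have h4 : ep ^ (q-2) ≤ em ^ (q-2) :=
      Real.rpow_le_rpow_of_nonpos hem hee hq2'
    nlinarith [mul_le_mul_of_nonneg_right h4 (sq_nonneg t)]

lemma pointwise_ineq (hq1 : 1 < q) (hq2 : q < 2) (hem : 0 < em) (hee : em ≤ ep)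
    {d : ℕ} (A B : EuclideanSpace ℝ (Fin d)) :
    ⟪Astar q em ep A, B - A⟫ +
      ((q-1)/2) * (em/ep) ^ (2-q) * ((max em (min ‖B‖ ep)) ^ (q-2) * ‖B - A‖^2)
      ≤ kappaStar q em ep ‖B‖ - kappaStar q em ep ‖A‖ := by
  have hep : 0 < ep := hem.trans_le hee
  have hq2' : q - 2 ≤ 0 := by linarith
  set a := ‖A‖ with hadef
  set b := ‖B‖ with hbdef
  set ca := (max em (min a ep)) ^ (q-2) with hca
  set cb := (max em (min b ep)) ^ (q-2) with hcb
  have hclA : em ≤ max em (min a ep) := le_max_left _ _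
  have hclA' : max em (min a ep) ≤ ep := max_le hee (min_le_right _ _)
  have hclB : em ≤ max em (min b ep) := le_max_left _ _
  have hclB' : max em (min b ep) ≤ ep := max_le hee (min_le_right _ _)
  have hca_ge : ep ^ (q-2) ≤ ca :=
    Real.rpow_le_rpow_of_nonpos (hem.trans_le hclA) hclA' hq2'
  have hcb_le : cb ≤ em ^ (q-2) :=
    Real.rpow_le_rpow_of_nonpos hem hclB hq2'
  have hcb_pos : 0 < cb := Real.rpow_pos_of_pos (hem.trans_le hclB) _
  have heppow : (0:ℝ) < ep ^ (q-2) := Real.rpow_pos_of_pos hep _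
  have hfac : (em/ep) ^ (2-q) * cb ≤ ep ^ (q-2) := by
    have h1 : (em/ep) ^ (2-q) = em ^ (2-q) * ep ^ (q-2) := by
      rw [Real.div_rpow hem.le hep.le, show (q-2 : ℝ) = -(2-q) by ring,
        Real.rpow_neg hep.le, div_eq_mul_inv]
    have h2 : em ^ (2-q) * em ^ (q-2) = 1 := by
      rw [← Real.rpow_add hem]; norm_num
    have h3 : (0:ℝ) ≤ (em/ep) ^ (2-q) := Real.rpow_nonneg (by positivity) _
    calc (em/ep) ^ (2-q) * cb ≤ (em/ep) ^ (2-q) * em ^ (q-2) :=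
          mul_le_mul_of_nonneg_left hcb_le h3
      _ = ep ^ (q-2) := by rw [h1]; linear_combination ep ^ (q-2) * h2
  have hi1 : ⟪Astar q em ep A, B - A⟫ = ca * (⟪A,B⟫ - a^2) := by
    show ⟪(max em (min ‖A‖ ep)) ^ (q-2) • A, B - A⟫ = _
    rw [real_inner_smul_left, inner_sub_right, real_inner_self_eq_norm_sq]
  have hn : ‖B - A‖^2 = b^2 - 2*⟪A,B⟫ + a^2 := by
    rw [@norm_sub_sq_real _ _ _ B A, real_inner_comm]
  have hiab : ⟪A,B⟫ ≤ a*b := real_inner_le_norm A B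
  have htan := kappa_tangent hq1 hq2 hem hee a b
  have hmf : mfun q em ep a = ca * a := rfl
  rw [hmf] at htan
  have hlam_le : (q-1) * ep ^ (q-2) ≤ ca := by nlinarith
  have hKq : (0:ℝ) ≤ (q-1)/2 := by linarith
  have hK : ((q-1)/2) * ((em/ep) ^ (2-q) * cb) ≤ ((q-1)/2) * ep ^ (q-2) :=
    mul_le_mul_of_nonneg_left hfac hKq
  have hKn : ((q-1)/2) * ((em/ep) ^ (2-q) * cb) * ‖B - A‖^2 ≤
      ((q-1)/2) * ep ^ (q-2) * ‖B - A‖^2 :=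
    mul_le_mul_of_nonneg_right hK (sq_nonneg _)
  have hprod : 0 ≤ (ca - (q-1) * ep ^ (q-2)) * (a*b - ⟪A,B⟫) :=
    mul_nonneg (by linarith) (by linarith)
  rw [hi1]
  nlinarith [htan, hKn, hprod, hn]

end pointwise
section helpers
variable {q em ep : ℝ} {d : ℕ}

lemma measurable_clamp_rpow {α : Type*} [MeasurableSpace α] {f : α → ℝ}
    (hf : Measurable f) (hem : 0 < em) (y : ℝ) :
    Measurable fun x => (max em (min (f x) ep)) ^ y := by
  have hcl : Measurable fun x => max em (min (f x) ep) :=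
    measurable_const.max (hf.min measurable_const)
  have hpos : ∀ x, 0 < max em (min (f x) ep) := fun x =>
    lt_of_lt_of_le hem (le_max_left _ _)
  have he : (fun x => (max em (min (f x) ep)) ^ y) =
      fun x => Real.exp (Real.log (max em (min (f x) ep)) * y) := by
    funext x; exact Real.rpow_def_of_pos (hpos x) y
  rw [he]
  exact Real.measurable_exp.comp ((Real.measurable_log.comp hcl).mul_const y)

lemma measurable_kappa (hq1 : 1 < q) {f : EuclideanSpace ℝ (Fin d) → EuclideanSpace ℝ (Fin d)}
    (hf : Measurable f) : Measurable fun x => kappaStar q em ep ‖f x‖ := by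
  have hn : Measurable fun x => ‖f x‖ := hf.norm
  unfold kappaStar
  refine Measurable.ite (measurableSet_le hn measurable_const) ?_
    (Measurable.ite (measurableSet_le hn measurable_const) ?_ ?_)
  · exact (((hn.pow_const 2).const_mul _).add_const _)
  · exact ((Real.continuous_rpow_const (by linarith : (0:ℝ) ≤ q)).measurable.comp hn).const_mul _
  · exact (((hn.pow_const 2).const_mul _).add_const _)

end helpers


/-- second addend estimate in the proof of exponential decay.
For `1 < q < 2` there is a constant `C_q < ∞` depending solely on `q` (independent of `ε`)
such that: whenever `Ω ⊂ ℝ^d` is measurable of finite measure, `σ_ε, τ_n ∈ L²(Ω;ℝ^d)`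
satisfy the Euler–Lagrange orthogonality `∫_Ω A*_ε(σ_ε)·(τ_n - σ_ε) dx = 0`, and
`w_n = clamp_ε(|τ_n|)^(q-2)`, one has
`(1/2) ∫_Ω w_n |τ_n - σ_ε|² dx ≤ C_q (ε₊/ε₋)^(2-q) (J*_ε(τ_n) - J*_ε(σ_ε))`. -/
theorem stmt17 (q : ℝ) (hq1 : 1 < q) (hq2 : q < 2) :
    ∃ Cq : ℝ, 0 < Cq ∧
      ∀ (d : ℕ) (em ep : ℝ), 0 < em → em ≤ ep →
        ∀ (Ω : Set (EuclideanSpace ℝ (Fin d))), MeasurableSet Ω → volume Ω < ⊤ →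
          ∀ (σe τn : EuclideanSpace ℝ (Fin d) → EuclideanSpace ℝ (Fin d)),
            Measurable σe → Measurable τn →
            IntegrableOn (fun x => ‖σe x‖ ^ 2) Ω volume →
            IntegrableOn (fun x => ‖τn x‖ ^ 2) Ω volume →
            (∫ x in Ω, ⟪Astar q em ep (σe x), τn x - σe x⟫) = 0 →
            (1/2) * (∫ x in Ω, (max em (min ‖τn x‖ ep)) ^ (q-2) * ‖τn x - σe x‖ ^ 2)
              ≤ Cq * (ep / em) ^ (2-q) * (Jeps q em ep Ω τn - Jeps q em ep Ω σe) := by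
  have hqm : (0:ℝ) < q - 1 := by linarith
  refine ⟨1/(q-1), by positivity, ?_⟩
  intro d em ep hem hee Ω hΩ hvol σe τn hmσ hmτ hiσ hiτ horth
  have hep : 0 < ep := hem.trans_le hee
  have hq2' : q - 2 ≤ 0 := by linarith
  have hem2 : (0:ℝ) < em ^ (q-2) := Real.rpow_pos_of_pos hem _
  -- notation
  set w : EuclideanSpace ℝ (Fin d) → ℝ := fun x => (max em (min ‖τn x‖ ep)) ^ (q-2) with hw
  set f1 : EuclideanSpace ℝ (Fin d) → ℝ :=
    fun x => ⟪Astar q em ep (σe x), τn x - σe x⟫ with hf1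
  set f2 : EuclideanSpace ℝ (Fin d) → ℝ := fun x => w x * ‖τn x - σe x‖ ^ 2 with hf2
  have hw_pos : ∀ x, 0 < w x := fun x =>
    Real.rpow_pos_of_pos (lt_of_lt_of_le hem (le_max_left _ _)) _
  have hw_le : ∀ x, w x ≤ em ^ (q-2) := fun x =>
    Real.rpow_le_rpow_of_nonpos hem (le_max_left _ _) hq2'
  -- dominating function
  set G : EuclideanSpace ℝ (Fin d) → ℝ :=
    fun x => em ^ (q-2) * (2 * ‖σe x‖^2 + 2 * ‖τn x‖^2) with hG
  have hiG : IntegrableOn G Ω volume :=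
    ((hiσ.const_mul 2).add (hiτ.const_mul 2)).const_mul _
  -- integrability of f2
  have hm_f2 : Measurable f2 :=
    (measurable_clamp_rpow hmτ.norm hem _).mul (((hmτ.sub hmσ).norm).pow_const 2)
  have hi_f2 : IntegrableOn f2 Ω volume := by
    refine Integrable.mono' hiG hm_f2.aestronglyMeasurable (ae_of_all _ fun x => ?_)
    have h1 : ‖τn x - σe x‖ ≤ ‖τn x‖ + ‖σe x‖ := norm_sub_le _ _
    have h2 : ‖τn x - σe x‖^2 ≤ 2 * ‖σe x‖^2 + 2 * ‖τn x‖^2 := by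
      nlinarith [norm_nonneg (τn x - σe x), norm_nonneg (τn x), norm_nonneg (σe x),
        mul_le_mul h1 h1 (norm_nonneg _) (by positivity : (0:ℝ) ≤ ‖τn x‖ + ‖σe x‖),
        sq_nonneg (‖τn x‖ - ‖σe x‖)]
    rw [Real.norm_eq_abs, abs_of_nonneg (mul_nonneg (hw_pos x).le (sq_nonneg _))]
    calc w x * ‖τn x - σe x‖^2 ≤ em ^ (q-2) * (2 * ‖σe x‖^2 + 2 * ‖τn x‖^2) :=
          mul_le_mul (hw_le x) h2 (sq_nonneg _) hem2.le
      _ = G x := rfl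
  -- integrability of f1
  have hm_f1 : Measurable f1 := by
    have hA : Measurable fun x => Astar q em ep (σe x) :=
      (measurable_clamp_rpow hmσ.norm hem _).smul hmσ
    exact hA.inner (hmτ.sub hmσ)
  have hi_f1 : IntegrableOn f1 Ω volume := by
    refine Integrable.mono' hiG hm_f1.aestronglyMeasurable (ae_of_all _ fun x => ?_)
    have h0 : ‖Astar q em ep (σe x)‖ ≤ em ^ (q-2) * ‖σe x‖ := by
      show ‖(max em (min ‖σe x‖ ep)) ^ (q-2) • σe x‖ ≤ _
      rw [norm_smul, Real.norm_eq_abs,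
        abs_of_pos (Real.rpow_pos_of_pos (lt_of_lt_of_le hem (le_max_left _ _)) _)]
      exact mul_le_mul_of_nonneg_right
        (Real.rpow_le_rpow_of_nonpos hem (le_max_left _ _) hq2') (norm_nonneg _)
    have h1 : ‖f1 x‖ ≤ ‖Astar q em ep (σe x)‖ * ‖τn x - σe x‖ := by
      rw [Real.norm_eq_abs]
      exact abs_real_inner_le_norm _ _
    have h2 : ‖τn x - σe x‖ ≤ ‖τn x‖ + ‖σe x‖ := norm_sub_le _ _
    have h3 : ‖Astar q em ep (σe x)‖ * ‖τn x - σe x‖ ≤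
        em ^ (q-2) * ‖σe x‖ * (‖τn x‖ + ‖σe x‖) :=
      mul_le_mul h0 h2 (norm_nonneg _) (by positivity)
    have h4 : em ^ (q-2) * ‖σe x‖ * (‖τn x‖ + ‖σe x‖) ≤ G x := by
      have := norm_nonneg (σe x); have := norm_nonneg (τn x)
      have : ‖σe x‖ * (‖τn x‖ + ‖σe x‖) ≤ 2 * ‖σe x‖^2 + 2 * ‖τn x‖^2 := by nlinarith
      calc em ^ (q-2) * ‖σe x‖ * (‖τn x‖ + ‖σe x‖)
          = em ^ (q-2) * (‖σe x‖ * (‖τn x‖ + ‖σe x‖)) := by ring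
        _ ≤ G x := mul_le_mul_of_nonneg_left this hem2.le
    linarith
  -- integrability of the energies
  have hkint : ∀ (f : EuclideanSpace ℝ (Fin d) → EuclideanSpace ℝ (Fin d)),
      Measurable f → IntegrableOn (fun x => ‖f x‖ ^ 2) Ω volume →
      IntegrableOn (fun x => kappaStar q em ep ‖f x‖) Ω volume := by
    intro f hf hif
    refine Integrable.mono'
      ((hif.const_mul ((1/2) * em ^ (q-2))).add
        (integrableOn_const (C := (1/q - 1/2) * ep ^ q) hvol.ne))
      (measurable_kappa hq1 hf).aestronglyMeasurable (ae_of_all _ fun x => ?_)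
    rw [Real.norm_eq_abs, abs_of_nonneg (kappa_nonneg hq1 hq2 hem hee (norm_nonneg _))]
    have := kappa_le hq1 hq2 hem hee (norm_nonneg (f x))
    simpa [mul_assoc] using this
  have hi_gτ := hkint τn hmτ hiτ
  have hi_gσ := hkint σe hmσ hiσ
  -- pointwise estimate
  have hpt : ∀ x, f1 x + ((q-1)/2) * (em/ep) ^ (2-q) * f2 x ≤
      kappaStar q em ep ‖τn x‖ - kappaStar q em ep ‖σe x‖ := by
    intro x
    have := pointwise_ineq hq1 hq2 hem hee (σe x) (τn x)
    simpa [hf1, hf2, hw, mul_assoc] using this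
  -- integrate
  have hi_lhs : IntegrableOn (fun x => f1 x + ((q-1)/2) * (em/ep) ^ (2-q) * f2 x) Ω volume :=
    hi_f1.add (hi_f2.const_mul _)
  have hi_rhs : IntegrableOn
      (fun x => kappaStar q em ep ‖τn x‖ - kappaStar q em ep ‖σe x‖) Ω volume :=
    hi_gτ.sub hi_gσ
  have hint := setIntegral_mono_on hi_lhs hi_rhs hΩ (fun x _ => hpt x)
  rw [integral_add hi_f1 (hi_f2.const_mul _), MeasureTheory.integral_const_mul,
    show (∫ x in Ω, f1 x) = 0 from horth, zero_add, integral_sub hi_gτ hi_gσ] at hint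
  have hI2 : 0 ≤ ∫ x in Ω, f2 x :=
    setIntegral_nonneg hΩ fun x _ => mul_nonneg (hw_pos x).le (sq_nonneg _)
  -- final algebra
  set I2 := ∫ x in Ω, f2 x with hI2def
  set D := (∫ x in Ω, kappaStar q em ep ‖τn x‖) - ∫ x in Ω, kappaStar q em ep ‖σe x‖ with hD
  have hRpos : (0:ℝ) < (ep/em) ^ (2-q) := Real.rpow_pos_of_pos (div_pos hep hem) _
  have hpow : (em/ep) ^ (2-q) = ((ep/em) ^ (2-q))⁻¹ := by
    rw [← Real.inv_rpow (div_nonneg hep.le hem.le), inv_div]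
  rw [hpow] at hint
  show (1/2) * I2 ≤ (1/(q-1)) * (ep/em) ^ (2-q) * D
  set R := (ep/em) ^ (2-q) with hR
  have h2 := mul_le_mul_of_nonneg_left hint (le_of_lt (div_pos hRpos hqm))
  have hl : R/(q-1) * ((q-1)/2 * R⁻¹ * I2) = (1/2) * I2 := by
    field_simp
  rw [hl] at h2
  calc (1/2) * I2 ≤ R/(q-1) * D := h2
    _ = (1/(q-1)) * R * D := by ring
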